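/- Let 𝒜 ∈ ℝ^{n₁×n₂×n₃} be nonzero and let (x₁⁰, x₂⁰, x₃⁰) be generated by Algorithm C0 (truncated leading singular vector of the mode-1 unfolding A₁, then of A₂ = reshape(A₁ᵀx₁⁰, n₂, n₃), then r₃-truncation of A₂ᵀ x₂⁰). Then 𝒜(x₁⁰, x₂⁰, x₃⁰) ≥ √(r₁r₂r₃/(n₁n₂²n₃)) · λ_max(A₁) ≥ √(r₁r₂r₃/(n₁n₂²n₃)) · v_opt, where v_opt is the maximum of 𝒜(x₁,x₂,x₃) over unit vectors x_j with ‖x_j‖₀ ≤ r_j. -/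

import Mathlib

open Finset

noncomputable def enormE {ι : Type*} [Fintype ι] (x : ι → ℝ) : ℝ :=
  Real.sqrt (∑ i, x i ^ 2)

def dot {ι : Type*} [Fintype ι] (x y : ι → ℝ) : ℝ := ∑ i, x i * y i

noncomputable def l0 {ι : Type*} [Fintype ι] (x : ι → ℝ) : ℕ :=
  (Finset.univ.filter fun i => x i ≠ 0).card

def IsTrunc {ι : Type*} [Fintype ι] [DecidableEq ι] (a : ι → ℝ) (r : ℕ) (ar : ι → ℝ) : Prop :=
  ∃ S : Finset ι, S.card = r ∧ (∀ i ∈ S, ar i = a i) ∧ (∀ i ∉ S, ar i = 0) ∧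
    ∀ i ∈ S, ∀ j ∉ S, |a j| ≤ |a i|

noncomputable def lmax {m n' : Type*} [Fintype m] [Fintype n'] (A : Matrix m n' ℝ) : ℝ :=
  sSup {c | ∃ x : n' → ℝ, enormE x = 1 ∧ c = enormE (A.mulVec x)}

noncomputable def fnorm {m n' : Type*} [Fintype m] [Fintype n'] (A : Matrix m n' ℝ) : ℝ :=
  Real.sqrt (∑ i, ∑ j, A i j ^ 2)

def tri {n1 n2 n3 : ℕ} (A : Fin n1 → Fin n2 → Fin n3 → ℝ)
    (x : Fin n1 → ℝ) (y : Fin n2 → ℝ) (z : Fin n3 → ℝ) : ℝ :=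
  ∑ i, ∑ j, ∑ k, A i j k * x i * y j * z k

def mlin {d : ℕ} {n : Fin d → ℕ} (A : (∀ j, Fin (n j)) → ℝ)
    (x : ∀ j, Fin (n j) → ℝ) : ℝ :=
  ∑ i, A i * ∏ j, x j (i j)

section Helpers
variable {ι : Type*} [Fintype ι]

lemma enorm_nonneg' (x : ι → ℝ) : 0 ≤ enormE x := Real.sqrt_nonneg _

lemma sq_enorm (x : ι → ℝ) : enormE x ^ 2 = ∑ i, x i ^ 2 :=
  Real.sq_sqrt (by positivity)

lemma enorm_eq_zero_iff (x : ι → ℝ) : enormE x = 0 ↔ x = 0 := by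
  unfold enormE
  rw [Real.sqrt_eq_zero (by positivity)]
  constructor
  · intro h; funext i
    have := (Finset.sum_eq_zero_iff_of_nonneg (fun i _ => by positivity)).1 h i (mem_univ i)
    exact pow_eq_zero_iff two_ne_zero |>.1 this
  · intro h; simp [h]

lemma dot_comm (x y : ι → ℝ) : dot x y = dot y x := by
  simp [dot, mul_comm]

lemma dot_self (x : ι → ℝ) : dot x x = enormE x ^ 2 := by
  rw [sq_enorm]; exact Finset.sum_congr rfl fun i _ => (pow_two (x i)).symm

lemma dot_le (x y : ι → ℝ) : dot x y ≤ enormE x * enormE y :=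
  Real.sum_mul_le_sqrt_mul_sqrt _ _ _

lemma dot_sq_le (x y : ι → ℝ) : dot x y ^ 2 ≤ enormE x ^ 2 * enormE y ^ 2 := by
  rw [sq_enorm, sq_enorm]; exact Finset.sum_mul_sq_le_sq_mul_sq _ _ _

lemma abs_le_enorm (x : ι → ℝ) (i : ι) : |x i| ≤ enormE x := by
  rw [← Real.sqrt_sq_eq_abs]
  exact Real.sqrt_le_sqrt (Finset.single_le_sum (f := fun i => x i ^ 2)
    (fun i _ => by positivity) (mem_univ i))

lemma dot_div_left (x y : ι → ℝ) (c : ℝ) :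
    dot (fun i => x i / c) y = dot x y / c := by
  simp only [dot, Finset.sum_div]
  exact Finset.sum_congr rfl fun i _ => by ring

lemma enorm_div (x : ι → ℝ) (c : ℝ) (hc : 0 ≤ c) :
    enormE (fun i => x i / c) = enormE x / c := by
  unfold enormE
  have h : ∑ i, (x i / c) ^ 2 = (∑ i, x i ^ 2) / c ^ 2 := by
    rw [Finset.sum_div]; exact Finset.sum_congr rfl fun i _ => by ring
  rw [h, Real.sqrt_div (by positivity), Real.sqrt_sq hc]


section MatrixLemmas
variable {m n' : Type*} [Fintype m] [Fintype n']

lemma dot_transpose (M : Matrix m n' ℝ) (x : m → ℝ) (w : n' → ℝ) :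
    dot (M.transpose.mulVec x) w = dot x (M.mulVec w) := by
  simp only [dot, Matrix.mulVec, dotProduct, Matrix.transpose_apply,
    Finset.sum_mul, Finset.mul_sum]
  rw [Finset.sum_comm]
  exact Finset.sum_congr rfl fun i _ => Finset.sum_congr rfl fun j _ => by ring

lemma enorm_mulVec_le_fnorm (M : Matrix m n' ℝ) (x : n' → ℝ) :
    enormE (M.mulVec x) ≤ fnorm M * enormE x := by
  have hsq : enormE (M.mulVec x) ^ 2 ≤ (fnorm M * enormE x) ^ 2 := by
    rw [sq_enorm, mul_pow, sq_enorm]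
    unfold fnorm
    rw [Real.sq_sqrt (by positivity)]
    calc ∑ i, (M.mulVec x i) ^ 2
        ≤ ∑ i, ((∑ j, M i j ^ 2) * ∑ j, x j ^ 2) := by
          refine Finset.sum_le_sum fun i _ => ?_
          simp only [Matrix.mulVec, dotProduct]
          exact Finset.sum_mul_sq_le_sq_mul_sq _ _ _
      _ = (∑ i, ∑ j, M i j ^ 2) * ∑ j, x j ^ 2 := by rw [Finset.sum_mul]
  have h2 : 0 ≤ fnorm M * enormE x := mul_nonneg (Real.sqrt_nonneg _) (enorm_nonneg' _)
  nlinarith [enorm_nonneg' (M.mulVec x)]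

lemma lmax_bddAbove (M : Matrix m n' ℝ) :
    BddAbove {c | ∃ x : n' → ℝ, enormE x = 1 ∧ c = enormE (M.mulVec x)} := by
  refine ⟨fnorm M, fun c hc => ?_⟩
  obtain ⟨x, hx, rfl⟩ := hc
  calc enormE (M.mulVec x) ≤ fnorm M * enormE x := enorm_mulVec_le_fnorm M x
    _ = fnorm M := by rw [hx, mul_one]

lemma enorm_indicator [DecidableEq n'] (p : n') :
    enormE (fun j : n' => if j = p then (1:ℝ) else 0) = 1 := by
  unfold enormE
  have : ∀ j : n', ((if j = p then (1:ℝ) else 0)) ^ 2 = if j = p then (1:ℝ) else 0 := by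
    intro j; split <;> norm_num
  rw [Finset.sum_congr rfl fun j _ => this j, Finset.sum_ite_eq' Finset.univ p (fun _ => (1:ℝ))]
  simp

variable [DecidableEq n'] [Nonempty n']

lemma lmax_nonneg (M : Matrix m n' ℝ) : 0 ≤ lmax M := by
  obtain ⟨p⟩ := ‹Nonempty n'›
  have hmem : enormE (M.mulVec (fun j => if j = p then (1:ℝ) else 0)) ∈
      {c | ∃ x : n' → ℝ, enormE x = 1 ∧ c = enormE (M.mulVec x)} :=
    ⟨_, enorm_indicator p, rfl⟩
  exact le_trans (enorm_nonneg' _) (le_csSup (lmax_bddAbove M) hmem)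

lemma enorm_mulVec_le (M : Matrix m n' ℝ) (x : n' → ℝ) :
    enormE (M.mulVec x) ≤ lmax M * enormE x := by
  rcases eq_or_ne (enormE x) 0 with h | h
  · rw [h, mul_zero]
    rw [enorm_eq_zero_iff] at h
    rw [h, Matrix.mulVec_zero]
    have : enormE (0 : m → ℝ) = 0 := (enorm_eq_zero_iff _).2 rfl
    rw [this]
  · have hx : 0 < enormE x := lt_of_le_of_ne (enorm_nonneg' x) (Ne.symm h)
    have hu : enormE (fun j => x j / enormE x) = 1 := by
      rw [enorm_div x _ hx.le, div_self h]
    have hle := le_csSup (lmax_bddAbove M)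
      (⟨_, hu, rfl⟩ : enormE (M.mulVec (fun j => x j / enormE x)) ∈
        {c | ∃ y : n' → ℝ, enormE y = 1 ∧ c = enormE (M.mulVec y)})
    have heq : M.mulVec (fun j => x j / enormE x) = fun i => (M.mulVec x) i / enormE x := by
      funext i
      simp only [Matrix.mulVec, dotProduct]
      rw [Finset.sum_div]
      exact Finset.sum_congr rfl fun j _ => by ring
    rw [heq, enorm_div _ _ hx.le, div_le_iff₀ hx] at hle
    exact hle

lemma enorm_transpose_mulVec_le (M : Matrix m n' ℝ) (y : m → ℝ) :
    enormE (M.transpose.mulVec y) ≤ lmax M * enormE y := by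
  set z := M.transpose.mulVec y with hz
  have h1 : enormE z ^ 2 = dot z z := (dot_self z).symm
  have h2 : dot z z = dot y (M.mulVec z) := dot_transpose M y z
  have h3 : dot y (M.mulVec z) ≤ enormE y * (lmax M * enormE z) :=
    le_trans (dot_le _ _) (mul_le_mul_of_nonneg_left (enorm_mulVec_le M z) (enorm_nonneg' y))
  rcases eq_or_ne (enormE z) 0 with h | h
  · rw [h]; exact mul_nonneg (lmax_nonneg M) (enorm_nonneg' y)
  · have hzpos : 0 < enormE z := lt_of_le_of_ne (enorm_nonneg' z) (Ne.symm h)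
    nlinarith

lemma abs_entry_le_lmax (M : Matrix m n' ℝ) (i : m) (p : n') : |M i p| ≤ lmax M := by
  have hmv : M.mulVec (fun j => if j = p then (1:ℝ) else 0) i = M i p := by
    simp only [Matrix.mulVec, dotProduct, mul_ite, mul_one, mul_zero]
    rw [Finset.sum_ite_eq' Finset.univ p (fun j => M i j)]
    simp
  calc |M i p| = |M.mulVec (fun j => if j = p then (1:ℝ) else 0) i| := by rw [hmv]
    _ ≤ enormE (M.mulVec (fun j => if j = p then (1:ℝ) else 0)) := abs_le_enorm _ i
    _ ≤ lmax M * enormE (fun j => if j = p then (1:ℝ) else 0) := enorm_mulVec_le M _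
    _ = lmax M := by rw [enorm_indicator p, mul_one]

end MatrixLemmas

section TruncLemmas
variable [DecidableEq ι]

lemma trunc_dot {a ar : ι → ℝ} {r : ℕ} (h : IsTrunc a r ar) :
    dot ar a = enormE ar ^ 2 := by
  obtain ⟨S, -, hin, hout, -⟩ := h
  rw [sq_enorm]
  refine Finset.sum_congr rfl fun i _ => ?_
  by_cases hi : i ∈ S
  · rw [hin i hi]; ring
  · rw [hout i hi]; ring

lemma trunc_sq_ge {a ar : ι → ℝ} {r : ℕ} (h : IsTrunc a r ar) :
    (r : ℝ) * ∑ i, a i ^ 2 ≤ (Fintype.card ι : ℝ) * ∑ i, ar i ^ 2 := by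
  obtain ⟨S, hcard, hin, hout, hmax⟩ := h
  have hs1 : ∑ i, ar i ^ 2 = ∑ i ∈ S, a i ^ 2 := by
    rw [← Finset.sum_add_sum_compl S fun i => ar i ^ 2]
    have e1 : ∑ i ∈ S, ar i ^ 2 = ∑ i ∈ S, a i ^ 2 :=
      Finset.sum_congr rfl fun i hi => by rw [hin i hi]
    have e2 : ∑ i ∈ Sᶜ, ar i ^ 2 = 0 :=
      Finset.sum_eq_zero fun i hi => by rw [hout i (Finset.mem_compl.1 hi)]; ring
    rw [e1, e2, add_zero]
  have key : (r : ℝ) * ∑ j ∈ Sᶜ, a j ^ 2 ≤ (Sᶜ.card : ℝ) * ∑ i ∈ S, a i ^ 2 := by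
    have hd : ∑ i ∈ S, ∑ j ∈ Sᶜ, a j ^ 2 ≤ ∑ i ∈ S, ∑ j ∈ Sᶜ, a i ^ 2 := by
      refine Finset.sum_le_sum fun i hi => Finset.sum_le_sum fun j hj => ?_
      have hm := hmax i hi j (Finset.mem_compl.1 hj)
      calc a j ^ 2 = |a j| ^ 2 := (sq_abs _).symm
        _ ≤ |a i| ^ 2 := pow_le_pow_left₀ (abs_nonneg _) hm 2
        _ = a i ^ 2 := sq_abs _
    have hl : ∑ i ∈ S, ∑ j ∈ Sᶜ, a j ^ 2 = (S.card : ℝ) * ∑ j ∈ Sᶜ, a j ^ 2 := by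
      rw [Finset.sum_const, nsmul_eq_mul]
    have hr : ∑ i ∈ S, ∑ j ∈ Sᶜ, a i ^ 2 = (Sᶜ.card : ℝ) * ∑ i ∈ S, a i ^ 2 := by
      rw [Finset.mul_sum]
      exact Finset.sum_congr rfl fun i _ => by rw [Finset.sum_const, nsmul_eq_mul]
    rw [hl, hcard] at hd
    rw [hr] at hd
    exact hd
  have htot : ∑ i, a i ^ 2 = ∑ i ∈ S, a i ^ 2 + ∑ j ∈ Sᶜ, a j ^ 2 :=
    (Finset.sum_add_sum_compl S _).symm
  have hcards : (r : ℝ) + (Sᶜ.card : ℝ) = (Fintype.card ι : ℝ) := by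
    rw [← hcard, ← Nat.cast_add]
    norm_cast
    exact Finset.card_add_card_compl S
  rw [hs1, htot]
  nlinarith [key, Finset.sum_nonneg fun i (_ : i ∈ S) => sq_nonneg (a i)]

lemma trunc_ne_zero {a ar : ι → ℝ} {r : ℕ} (h : IsTrunc a r ar) (hr : 1 ≤ r)
    (ha : a ≠ 0) : ar ≠ 0 := by
  obtain ⟨S, hcard, hin, hout, hmax⟩ := h
  obtain ⟨j0, hj0⟩ : ∃ j, a j ≠ 0 := by
    by_contra hcon; push_neg at hcon; exact ha (funext hcon)
  obtain ⟨i, hi⟩ : S.Nonempty := Finset.card_pos.1 (hcard ▸ hr)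
  intro hzero
  by_cases hj : j0 ∈ S
  · exact hj0 (by rw [← hin j0 hj, hzero]; rfl)
  · have h1 := hmax i hi j0 hj
    have hai : a i = 0 := by rw [← hin i hi, hzero]; rfl
    rw [hai, abs_zero] at h1
    exact hj0 (abs_eq_zero.1 (le_antisymm h1 (abs_nonneg _)))

end TruncLemmas
end Helpers

set_option maxHeartbeats 1000000 in
/-- Theorem 3.3: approximation bound of Algorithm C0 (d = 3):
𝒜(x₁⁰,x₂⁰,x₃⁰) ≥ √(r₁r₂r₃/(n₁n₂²n₃))·λ_max(A₁) ≥ √(r₁r₂r₃/(n₁n₂²n₃))·v_opt. -/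
theorem stmt_12 {n1 n2 n3 : ℕ} (A : Fin n1 → Fin n2 → Fin n3 → ℝ) (hA : A ≠ 0)
    (r1 r2 r3 : ℕ) (hr1 : 1 ≤ r1 ∧ r1 ≤ n1) (hr2 : 1 ≤ r2 ∧ r2 ≤ n2)
    (hr3 : 1 ≤ r3 ∧ r3 ≤ n3)
    -- mode-1 unfolding A₁
    (A1 : Matrix (Fin n1) (Fin n2 × Fin n3) ℝ) (hA1 : A1 = fun i jk => A i jk.1 jk.2)
    -- leading singular vector pair of A₁ and truncation
    (xb1 : Fin n1 → ℝ) (wb1 : Fin n2 × Fin n3 → ℝ)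
    (hxb1 : enormE xb1 = 1) (hwb1 : enormE wb1 = 1)
    (hsv11 : A1.mulVec wb1 = fun i => lmax A1 * xb1 i)
    (hsv12 : A1.transpose.mulVec xb1 = fun p => lmax A1 * wb1 p)
    (t1 : Fin n1 → ℝ) (ht1 : IsTrunc xb1 r1 t1)
    (x1 : Fin n1 → ℝ) (hx1 : x1 = fun i => t1 i / enormE t1)
    -- A₂ = reshape(A₁ᵀ x₁⁰, n₂, n₃), its leading singular pair and truncation
    (A2 : Matrix (Fin n2) (Fin n3) ℝ) (hA2 : A2 = fun j k => A1.transpose.mulVec x1 (j, k))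
    (xb2 : Fin n2 → ℝ) (wb2 : Fin n3 → ℝ)
    (hxb2 : enormE xb2 = 1) (hwb2 : enormE wb2 = 1)
    (hsv21 : A2.mulVec wb2 = fun j => lmax A2 * xb2 j)
    (hsv22 : A2.transpose.mulVec xb2 = fun k => lmax A2 * wb2 k)
    (t2 : Fin n2 → ℝ) (ht2 : IsTrunc xb2 r2 t2)
    (x2 : Fin n2 → ℝ) (hx2 : x2 = fun j => t2 j / enormE t2)
    -- x₃⁰ = normalized r₃-truncation of A₂ᵀx₂⁰
    (t3 : Fin n3 → ℝ) (ht3 : IsTrunc (A2.transpose.mulVec x2) r3 t3)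
    (x3 : Fin n3 → ℝ) (hx3 : x3 = fun k => t3 k / enormE t3) :
    tri A x1 x2 x3 ≥
        Real.sqrt ((r1 : ℝ) * r2 * r3 / ((n1 : ℝ) * n2 ^ 2 * n3)) * lmax A1 ∧
      ∀ y1 y2 y3, enormE y1 = 1 → l0 y1 ≤ r1 → enormE y2 = 1 → l0 y2 ≤ r2 →
        enormE y3 = 1 → l0 y3 ≤ r3 →
        Real.sqrt ((r1 : ℝ) * r2 * r3 / ((n1 : ℝ) * n2 ^ 2 * n3)) * tri A y1 y2 y3 ≤
          tri A x1 x2 x3 := by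
  obtain ⟨hr1a, hr1b⟩ := hr1
  obtain ⟨hr2a, hr2b⟩ := hr2
  obtain ⟨hr3a, hr3b⟩ := hr3
  have hn1 : 0 < n1 := lt_of_lt_of_le hr1a hr1b
  have hn2 : 0 < n2 := lt_of_lt_of_le hr2a hr2b
  have hn3 : 0 < n3 := lt_of_lt_of_le hr3a hr3b
  have hn1R : (0:ℝ) < n1 := by exact_mod_cast hn1
  have hn2R : (0:ℝ) < n2 := by exact_mod_cast hn2
  have hn3R : (0:ℝ) < n3 := by exact_mod_cast hn3
  have hr1R : (0:ℝ) < r1 := by exact_mod_cast hr1a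
  have hr2R : (0:ℝ) < r2 := by exact_mod_cast hr2a
  have hr3R : (0:ℝ) < r3 := by exact_mod_cast hr3a
  haveI : Nonempty (Fin n1) := Fin.pos_iff_nonempty.1 hn1
  haveI : Nonempty (Fin n2) := Fin.pos_iff_nonempty.1 hn2
  haveI : Nonempty (Fin n3) := Fin.pos_iff_nonempty.1 hn3
  haveI : Nonempty (Fin n2 × Fin n3) :=
    ⟨(Classical.arbitrary _, Classical.arbitrary _)⟩
  set lam := lmax A1 with hlam
  set lam2 := lmax A2 with hlam2
  set c' := (r1 : ℝ) * r2 * r3 / ((n1 : ℝ) * n2 ^ 2 * n3) with hc'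
  -- lam > 0
  obtain ⟨i0, j0, k0, hA0⟩ : ∃ i j k, A i j k ≠ 0 := by
    by_contra hc; push_neg at hc
    exact hA (funext fun i => funext fun j => funext fun k => hc i j k)
  have hent : A1 i0 (j0, k0) = A i0 j0 k0 := by rw [hA1]
  have hlampos : 0 < lam := by
    have h := abs_entry_le_lmax A1 i0 (j0, k0)
    rw [hent] at h
    exact lt_of_lt_of_le (abs_pos.2 hA0) h
  -- norms of singular vectors
  have hxb1s : ∑ i, xb1 i ^ 2 = 1 := by rw [← sq_enorm, hxb1]; norm_num
  have hxb2s : ∑ i, xb2 i ^ 2 = 1 := by rw [← sq_enorm, hxb2]; norm_num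
  -- truncation nonvanishing
  have hxb1ne : xb1 ≠ 0 := fun h => by
    rw [(enorm_eq_zero_iff xb1).2 h] at hxb1; norm_num at hxb1
  have hxb2ne : xb2 ≠ 0 := fun h => by
    rw [(enorm_eq_zero_iff xb2).2 h] at hxb2; norm_num at hxb2
  have ht1ne : t1 ≠ 0 := trunc_ne_zero ht1 hr1a hxb1ne
  have ht1pos : 0 < enormE t1 :=
    (enorm_nonneg' t1).lt_of_ne fun h => ht1ne ((enorm_eq_zero_iff t1).1 h.symm)
  have ht2ne : t2 ≠ 0 := trunc_ne_zero ht2 hr2a hxb2ne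
  have ht2pos : 0 < enormE t2 :=
    (enorm_nonneg' t2).lt_of_ne fun h => ht2ne ((enorm_eq_zero_iff t2).1 h.symm)
  -- inner products with truncations
  have hd1 : dot x1 xb1 = enormE t1 := by
    rw [hx1, dot_div_left, trunc_dot ht1, pow_two, mul_div_assoc, div_self ht1pos.ne', mul_one]
  have hd2 : dot x2 xb2 = enormE t2 := by
    rw [hx2, dot_div_left, trunc_dot ht2, pow_two, mul_div_assoc, div_self ht2pos.ne', mul_one]
  -- truncation energy bounds
  have ht1sq : (r1 : ℝ) / n1 ≤ enormE t1 ^ 2 := by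
    have h := trunc_sq_ge ht1
    rw [hxb1s, Fintype.card_fin, mul_one] at h
    rw [sq_enorm, div_le_iff₀ hn1R]
    linarith
  have ht2sq : (r2 : ℝ) / n2 ≤ enormE t2 ^ 2 := by
    have h := trunc_sq_ge ht2
    rw [hxb2s, Fintype.card_fin, mul_one] at h
    rw [sq_enorm, div_le_iff₀ hn2R]
    linarith
  -- Frobenius norm of A2
  set u := A1.transpose.mulVec x1 with hu
  have hfA2 : fnorm A2 ^ 2 = enormE u ^ 2 := by
    rw [sq_enorm]
    unfold fnorm
    rw [Real.sq_sqrt (by positivity), hA2, Fintype.sum_prod_type]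
  have hdotu : dot u wb1 = lam * enormE t1 := by
    rw [hu, dot_transpose, hsv11]
    have h : dot x1 (fun i => lam * xb1 i) = lam * dot x1 xb1 := by
      simp only [dot, Finset.mul_sum]
      exact Finset.sum_congr rfl fun i _ => by ring
    rw [h, hd1]
  have hfA2ge : lam ^ 2 * ((r1 : ℝ) / n1) ≤ fnorm A2 ^ 2 := by
    have h1 := dot_sq_le u wb1
    rw [hwb1, hdotu] at h1
    have h2 : lam ^ 2 * ((r1 : ℝ) / n1) ≤ lam ^ 2 * enormE t1 ^ 2 :=
      mul_le_mul_of_nonneg_left ht1sq (sq_nonneg lam)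
    rw [hfA2]
    nlinarith
  -- lam2 bound
  have hlam2sq : fnorm A2 ^ 2 / n2 ≤ lam2 ^ 2 := by
    have hrow : ∀ i : Fin n2, ∑ k, A2 i k ^ 2 ≤ lam2 ^ 2 := by
      intro i
      have h := enorm_transpose_mulVec_le A2 (fun j => if j = i then (1:ℝ) else 0)
      rw [enorm_indicator i, mul_one] at h
      have hterm : A2.transpose.mulVec (fun j => if j = i then (1:ℝ) else 0) =
          fun k => A2 i k := by
        funext k
        simp only [Matrix.mulVec, dotProduct, Matrix.transpose_apply, mul_ite,
          mul_one, mul_zero]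
        rw [Finset.sum_ite_eq' Finset.univ i (fun j => A2 j k)]
        simp
      rw [hterm] at h
      calc ∑ k, A2 i k ^ 2 = enormE (fun k => A2 i k) ^ 2 := (sq_enorm _).symm
        _ ≤ lam2 ^ 2 := pow_le_pow_left₀ (enorm_nonneg' _) h 2
    unfold fnorm
    rw [Real.sq_sqrt (by positivity), div_le_iff₀ hn2R]
    calc ∑ i, ∑ k, A2 i k ^ 2 ≤ ∑ _i : Fin n2, lam2 ^ 2 :=
          Finset.sum_le_sum fun i _ => hrow i
      _ = n2 * lam2 ^ 2 := by
          rw [Finset.sum_const, Finset.card_univ, Fintype.card_fin, nsmul_eq_mul]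
      _ = lam2 ^ 2 * n2 := mul_comm _ _
  -- vector v = A2ᵀ x2
  set v := A2.transpose.mulVec x2 with hv
  have hdotv : dot v wb2 = lam2 * enormE t2 := by
    rw [hv, dot_transpose, hsv21]
    have h : dot x2 (fun j => lam2 * xb2 j) = lam2 * dot x2 xb2 := by
      simp only [dot, Finset.mul_sum]
      exact Finset.sum_congr rfl fun i _ => by ring
    rw [h, hd2]
  have hvsq : lam2 ^ 2 * ((r2 : ℝ) / n2) ≤ enormE v ^ 2 := by
    have h1 := dot_sq_le v wb2
    rw [hwb2, hdotv] at h1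
    have h2 : lam2 ^ 2 * ((r2 : ℝ) / n2) ≤ lam2 ^ 2 * enormE t2 ^ 2 :=
      mul_le_mul_of_nonneg_left ht2sq (sq_nonneg lam2)
    nlinarith
  have hstep : lam ^ 2 * ((r1 : ℝ) / n1) / n2 ≤ lam2 ^ 2 :=
    le_trans (by gcongr) hlam2sq
  have hvchain : lam ^ 2 * ((r1 : ℝ) / n1) / n2 * ((r2 : ℝ) / n2) ≤ enormE v ^ 2 :=
    le_trans (mul_le_mul_of_nonneg_right hstep (by positivity)) hvsq
  have hvposval : 0 < lam ^ 2 * ((r1 : ℝ) / n1) / n2 * ((r2 : ℝ) / n2) := by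
    apply mul_pos
    apply div_pos
    exact mul_pos (pow_pos hlampos 2) (div_pos hr1R hn1R)
    exact hn2R
    exact div_pos hr2R hn2R
  have hvpos : 0 < enormE v ^ 2 := lt_of_lt_of_le hvposval hvchain
  have hvne : v ≠ 0 := by
    intro h
    rw [(enorm_eq_zero_iff v).2 h] at hvpos
    norm_num at hvpos
  have ht3ne : t3 ≠ 0 := trunc_ne_zero ht3 hr3a hvne
  have ht3pos : 0 < enormE t3 :=
    (enorm_nonneg' t3).lt_of_ne fun h => ht3ne ((enorm_eq_zero_iff t3).1 h.symm)
  have ht3sq : (r3 : ℝ) / n3 * enormE v ^ 2 ≤ enormE t3 ^ 2 := by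
    have h := trunc_sq_ge ht3
    rw [Fintype.card_fin] at h
    rw [sq_enorm, sq_enorm, div_mul_eq_mul_div, div_le_iff₀ hn3R]
    linarith
  -- tri A x1 x2 x3 = enormE t3
  have h1 : dot v x3 = ∑ k, ∑ j, ∑ i, A i j k * x1 i * x2 j * x3 k := by
    simp only [hv, dot, Matrix.mulVec, dotProduct, Matrix.transpose_apply, hA2, hu, hA1, Matrix.transpose, Matrix.of_apply,
      Finset.sum_mul]
  have h2 : tri A x1 x2 x3 = ∑ k, ∑ j, ∑ i, A i j k * x1 i * x2 j * x3 k := by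
    unfold tri
    calc ∑ i, ∑ j, ∑ k, A i j k * x1 i * x2 j * x3 k
        = ∑ j, ∑ i, ∑ k, A i j k * x1 i * x2 j * x3 k := Finset.sum_comm
      _ = ∑ j, ∑ k, ∑ i, A i j k * x1 i * x2 j * x3 k :=
          Finset.sum_congr rfl fun j _ => Finset.sum_comm
      _ = ∑ k, ∑ j, ∑ i, A i j k * x1 i * x2 j * x3 k := Finset.sum_comm
  have htri : tri A x1 x2 x3 = enormE t3 := by
    rw [h2, ← h1, hx3, dot_comm, dot_div_left, trunc_dot ht3, pow_two, mul_div_assoc,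
      div_self ht3pos.ne', mul_one]
  -- final squared bound
  have hsqfinal : c' * lam ^ 2 ≤ enormE t3 ^ 2 := by
    have heq : c' * lam ^ 2 =
        (r3 : ℝ) / n3 * (lam ^ 2 * ((r1 : ℝ) / n1) / n2 * ((r2 : ℝ) / n2)) := by
      rw [hc']
      field_simp
    rw [heq]
    calc (r3 : ℝ) / n3 * (lam ^ 2 * ((r1 : ℝ) / n1) / n2 * ((r2 : ℝ) / n2))
        ≤ (r3 : ℝ) / n3 * enormE v ^ 2 :=
          mul_le_mul_of_nonneg_left hvchain (by positivity)
      _ ≤ enormE t3 ^ 2 := ht3sq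
  have hmain : Real.sqrt c' * lam ≤ tri A x1 x2 x3 := by
    rw [htri, show enormE t3 = Real.sqrt (enormE t3 ^ 2) from (Real.sqrt_sq ht3pos.le).symm,
      show Real.sqrt c' * lam = Real.sqrt (c' * lam ^ 2) by
        rw [Real.sqrt_mul (by positivity), Real.sqrt_sq hlampos.le]]
    exact Real.sqrt_le_sqrt hsqfinal
  refine ⟨hmain, ?_⟩
  intro y1 y2 y3 hy1 _ hy2 _ hy3 _
  set w : Fin n2 × Fin n3 → ℝ := fun p => y2 p.1 * y3 p.2 with hw
  have hwnorm : enormE w = 1 := by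
    unfold enormE
    have hsum : ∑ p : Fin n2 × Fin n3, w p ^ 2 = (∑ j, y2 j ^ 2) * (∑ k, y3 k ^ 2) := by
      rw [Fintype.sum_prod_type, Finset.sum_mul_sum]
      exact Finset.sum_congr rfl fun j _ => Finset.sum_congr rfl fun k _ => by
        simp only [hw]; ring
    rw [hsum, ← sq_enorm, ← sq_enorm, hy2, hy3]
    norm_num
  have htri_y : tri A y1 y2 y3 = dot y1 (A1.mulVec w) := by
    have h : dot y1 (A1.mulVec w) = ∑ i, ∑ j, ∑ k, A i j k * y1 i * y2 j * y3 k := by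
      simp only [dot, Matrix.mulVec, dotProduct, hA1, hw, Fintype.sum_prod_type,
        Finset.mul_sum]
      exact Finset.sum_congr rfl fun i _ => Finset.sum_congr rfl fun j _ =>
        Finset.sum_congr rfl fun k _ => by ring
    rw [h]; rfl
  have hley : tri A y1 y2 y3 ≤ lam := by
    calc tri A y1 y2 y3 = dot y1 (A1.mulVec w) := htri_y
      _ ≤ enormE y1 * enormE (A1.mulVec w) := dot_le _ _
      _ = enormE (A1.mulVec w) := by rw [hy1, one_mul]
      _ ≤ lam * enormE w := enorm_mulVec_le A1 w
      _ = lam := by rw [hwnorm, mul_one]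
  calc Real.sqrt c' * tri A y1 y2 y3 ≤ Real.sqrt c' * lam :=
        mul_le_mul_of_nonneg_left hley (Real.sqrt_nonneg _)
    _ ≤ tri A x1 x2 x3 := hmain
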